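/- For every separable state ρ on ℂ²⊗ℂ² and every g₁, g₂, g₃ with |g_q| ≤ 1, the operator W = (1/4)[I⊗I + Σ_{q=1}^3 g_q σ_q⊗σ_q] satisfies Tr[Wρ] ≥ 0, where σ_q are the Pauli matrices. -/

import Mathlib

open scoped BigOperators Matrix Kronecker ComplexOrder

namespace SSDSE13

def sigma1 : Matrix (Fin 2) (Fin 2) ℂ := !![0, 1; 1, 0]
noncomputable def sigma2 : Matrix (Fin 2) (Fin 2) ℂ := !![0, -Complex.I; Complex.I, 0]
def sigma3 : Matrix (Fin 2) (Fin 2) ℂ := !![1, 0; 0, -1]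

lemma tr1 (a : Matrix (Fin 2) (Fin 2) ℂ) : (sigma1 * a).trace = a 1 0 + a 0 1 := by
  simp [sigma1, Matrix.trace_fin_two, Matrix.mul_apply, Matrix.vecMul, dotProduct,
    Fin.sum_univ_two]

lemma tr2 (a : Matrix (Fin 2) (Fin 2) ℂ) :
    (sigma2 * a).trace = Complex.I * (a 0 1 - a 1 0) := by
  simp [sigma2, Matrix.trace_fin_two, Matrix.mul_apply, Matrix.vecMul, dotProduct,
    Fin.sum_univ_two]; ring

lemma tr3 (a : Matrix (Fin 2) (Fin 2) ℂ) : (sigma3 * a).trace = a 0 0 - a 1 1 := by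
  simp [sigma3, Matrix.trace_fin_two, Matrix.mul_apply, Matrix.vecMul, dotProduct,
    Fin.sum_univ_two]
  ring

lemma facts (a : Matrix (Fin 2) (Fin 2) ℂ) (ha : a.PosSemidef) (ht : a.trace = 1) :
    a 1 0 = (starRingEnd ℂ) (a 0 1) ∧ a 0 0 = ((a 0 0).re : ℂ) ∧ a 1 1 = ((a 1 1).re : ℂ) ∧
    (a 0 0).re + (a 1 1).re = 1 ∧ 0 ≤ (a 0 0).re ∧ 0 ≤ (a 1 1).re ∧
    (a 0 1).re ^ 2 + (a 0 1).im ^ 2 ≤ (a 0 0).re * (a 1 1).re := by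
  obtain ⟨hh, hq⟩ := Matrix.posSemidef_iff_dotProduct_mulVec.mp ha
  have e10 : a 1 0 = (starRingEnd ℂ) (a 0 1) := by
    have := congrFun (congrFun hh 1) 0
    simpa [Matrix.conjTranspose_apply] using this.symm
  have e00 : (a 0 0).im = 0 := by
    have := congrFun (congrFun hh 0) 0
    have : (starRingEnd ℂ) (a 0 0) = a 0 0 := by
      simpa [Matrix.conjTranspose_apply] using this
    have h2 := congrArg Complex.im this
    simp only [Complex.conj_im] at h2
    linarith
  have e11 : (a 1 1).im = 0 := by
    have := congrFun (congrFun hh 1) 1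
    have : (starRingEnd ℂ) (a 1 1) = a 1 1 := by
      simpa [Matrix.conjTranspose_apply] using this
    have h2 := congrArg Complex.im this
    simp only [Complex.conj_im] at h2
    linarith
  have h00 : a 0 0 = ((a 0 0).re : ℂ) := by
    exact Complex.ext (by simp) (by simp [e00])
  have h11 : a 1 1 = ((a 1 1).re : ℂ) := by
    exact Complex.ext (by simp) (by simp [e11])
  have htr : (a 0 0).re + (a 1 1).re = 1 := by
    have := congrArg Complex.re ht
    simpa [Matrix.trace_fin_two, Complex.add_re] using this
  set p := (a 0 0).re; set q := (a 1 1).re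
  set u := (a 0 1).re; set v := (a 0 1).im
  have hp : 0 ≤ p := by
    have h := hq ![1, 0]
    rw [Complex.le_def] at h
    have := h.1
    simpa [dotProduct, Matrix.mulVec, Fin.sum_univ_two, h00] using this
  have hq' : 0 ≤ q := by
    have h := hq ![0, 1]
    rw [Complex.le_def] at h
    have := h.1
    simpa [dotProduct, Matrix.mulVec, Fin.sum_univ_two, h11] using this
  have key1 : 0 ≤ p * (p * q - (u ^ 2 + v ^ 2)) := by
    have h := hq ![a 0 1, -(p : ℂ)]
    rw [Complex.le_def] at h
    have h1 := h.1
    simp only [dotProduct, Matrix.mulVec, Fin.sum_univ_two, Matrix.cons_val_zero,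
      Matrix.cons_val_one, Matrix.head_cons, Pi.star_apply, star_neg, RCLike.star_def,
      Complex.conj_ofReal, Complex.zero_re] at h1
    rw [e10, h00, h11] at h1
    have ha01 : a 0 1 = (u : ℂ) + v * Complex.I := (Complex.re_add_im _).symm
    rw [ha01] at h1
    simp only [map_add, map_mul, Complex.conj_ofReal, Complex.conj_I, Complex.add_re,
      Complex.mul_re, Complex.sub_re, Complex.neg_re, Complex.ofReal_re, Complex.ofReal_im,
      Complex.I_re, Complex.I_im, Complex.mul_im, Complex.add_im, Complex.neg_im,
      Complex.sub_im, map_neg, Complex.zero_re, Complex.zero_im] at h1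
    nlinarith [h1, htr]
  have key2 : 0 ≤ q * (p * q - (u ^ 2 + v ^ 2)) := by
    have h := hq ![-(q : ℂ), a 1 0]
    rw [Complex.le_def] at h
    have h1 := h.1
    simp only [dotProduct, Matrix.mulVec, Fin.sum_univ_two, Matrix.cons_val_zero,
      Matrix.cons_val_one, Matrix.head_cons, Pi.star_apply, star_neg, RCLike.star_def,
      Complex.conj_ofReal] at h1
    rw [e10, h00, h11] at h1
    have ha01 : a 0 1 = (u : ℂ) + v * Complex.I := (Complex.re_add_im _).symm
    rw [ha01] at h1
    simp only [map_add, map_mul, Complex.conj_ofReal, Complex.conj_I, Complex.add_re,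
      Complex.mul_re, Complex.sub_re, Complex.neg_re, Complex.ofReal_re, Complex.ofReal_im,
      Complex.I_re, Complex.I_im, Complex.mul_im, Complex.add_im, Complex.neg_im,
      Complex.sub_im, map_neg, Complex.zero_re, Complex.zero_im] at h1
    nlinarith [h1, htr]
  refine ⟨e10, h00, h11, htr, hp, hq', ?_⟩
  nlinarith [key1, key2, htr]

lemma key (g₁ g₂ g₃ : ℝ) (h₁ : |g₁| ≤ 1) (h₂ : |g₂| ≤ 1) (h₃ : |g₃| ≤ 1)
    (a b : Matrix (Fin 2) (Fin 2) ℂ) (ha : a.PosSemidef) (hta : a.trace = 1)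
    (hb : b.PosSemidef) (htb : b.trace = 1) :
    0 ≤ (((1 / 4 : ℂ) • ((1 : Matrix (Fin 2 × Fin 2) (Fin 2 × Fin 2) ℂ)
        + (g₁ : ℂ) • (sigma1 ⊗ₖ sigma1) + (g₂ : ℂ) • (sigma2 ⊗ₖ sigma2)
        + (g₃ : ℂ) • (sigma3 ⊗ₖ sigma3)) * (a ⊗ₖ b)).trace).re := by
  obtain ⟨ea, ha00, ha11, htra, hpa, hqa, hba⟩ := facts a ha hta
  obtain ⟨eb, hb00, hb11, htrb, hpb, hqb, hbb⟩ := facts b hb htb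
  set pa := (a 0 0).re; set qa := (a 1 1).re; set ua := (a 0 1).re; set va := (a 0 1).im
  set pb := (b 0 0).re; set qb := (b 1 1).re; set ub := (b 0 1).re; set vb := (b 0 1).im
  have ha01 : a 0 1 = (ua : ℂ) + va * Complex.I := (Complex.re_add_im _).symm
  have hb01 : b 0 1 = (ub : ℂ) + vb * Complex.I := (Complex.re_add_im _).symm
  rw [Matrix.smul_mul, Matrix.add_mul, Matrix.add_mul, Matrix.add_mul,
    Matrix.smul_mul, Matrix.smul_mul, Matrix.smul_mul, one_mul]
  simp only [← Matrix.mul_kronecker_mul]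
  simp only [Matrix.trace_smul, Matrix.trace_add, Matrix.trace_kronecker,
    tr1, tr2, tr3, hta, htb]
  have hA : (a 1 0 + a 0 1) * (b 1 0 + b 0 1) = (((2 * ua) * (2 * ub) : ℝ) : ℂ) := by
    rw [ea, eb, ha01, hb01]
    simp only [map_add, map_mul, Complex.conj_ofReal, Complex.conj_I]
    push_cast; ring
  have hB : Complex.I * (a 0 1 - a 1 0) * (Complex.I * (b 0 1 - b 1 0))
      = (((2 * va) * (2 * vb) : ℝ) : ℂ) := by
    rw [ea, eb, ha01, hb01]
    simp only [map_add, map_mul, Complex.conj_ofReal, Complex.conj_I]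
    push_cast
    linear_combination ((va : ℂ) * vb * 4 * (Complex.I ^ 2 - 1)) * Complex.I_sq
  have hC : (a 0 0 - a 1 1) * (b 0 0 - b 1 1) = (((pa - qa) * (pb - qb) : ℝ) : ℂ) := by
    rw [ha00, ha11, hb00, hb11]; push_cast; ring
  rw [hA, hB, hC]
  have hfin : (1 / 4 : ℂ) • ((1 : ℂ) * 1 + (g₁ : ℂ) • (((2 * ua) * (2 * ub) : ℝ) : ℂ)
      + (g₂ : ℂ) • (((2 * va) * (2 * vb) : ℝ) : ℂ)
      + (g₃ : ℂ) • (((pa - qa) * (pb - qb) : ℝ) : ℂ))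
      = ((1 / 4 * (1 + g₁ * ((2 * ua) * (2 * ub)) + g₂ * ((2 * va) * (2 * vb))
          + g₃ * ((pa - qa) * (pb - qb))) : ℝ) : ℂ) := by
    simp only [smul_eq_mul]; push_cast; ring
  rw [hfin, Complex.ofReal_re]
  obtain ⟨h1l, h1r⟩ := abs_le.mp h₁
  obtain ⟨h2l, h2r⟩ := abs_le.mp h₂
  obtain ⟨h3l, h3r⟩ := abs_le.mp h₃
  nlinarith [mul_nonneg (by linarith : (0:ℝ) ≤ 1 + g₁) (sq_nonneg (2 * ua + 2 * ub)),
    mul_nonneg (by linarith : (0:ℝ) ≤ 1 - g₁) (sq_nonneg (2 * ua - 2 * ub)),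
    mul_nonneg (by linarith : (0:ℝ) ≤ 1 + g₂) (sq_nonneg (2 * va + 2 * vb)),
    mul_nonneg (by linarith : (0:ℝ) ≤ 1 - g₂) (sq_nonneg (2 * va - 2 * vb)),
    mul_nonneg (by linarith : (0:ℝ) ≤ 1 + g₃) (sq_nonneg ((pa - qa) + (pb - qb))),
    mul_nonneg (by linarith : (0:ℝ) ≤ 1 - g₃) (sq_nonneg ((pa - qa) - (pb - qb))),
    hba, hbb, htra, htrb]

/-- ρ is a separable state on ℂ²⊗ℂ². -/
def IsSeparableState (ρ : Matrix (Fin 2 × Fin 2) (Fin 2 × Fin 2) ℂ) : Prop :=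
  ∃ (n : ℕ) (w : Fin n → ℝ) (a b : Fin n → Matrix (Fin 2) (Fin 2) ℂ),
    (∀ i, 0 ≤ w i) ∧ (∑ i, w i = 1) ∧
    (∀ i, (a i).PosSemidef ∧ (a i).trace = 1) ∧
    (∀ i, (b i).PosSemidef ∧ (b i).trace = 1) ∧
    ρ = ∑ i, ((w i : ℝ) : ℂ) • (a i ⊗ₖ b i)

theorem witness_nonneg_on_separable (g₁ g₂ g₃ : ℝ)
    (h₁ : |g₁| ≤ 1) (h₂ : |g₂| ≤ 1) (h₃ : |g₃| ≤ 1)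
    (ρ : Matrix (Fin 2 × Fin 2) (Fin 2 × Fin 2) ℂ) (hρ : IsSeparableState ρ) :
    0 ≤ (((1 / 4 : ℂ) • ((1 : Matrix (Fin 2 × Fin 2) (Fin 2 × Fin 2) ℂ)
        + (g₁ : ℂ) • (sigma1 ⊗ₖ sigma1) + (g₂ : ℂ) • (sigma2 ⊗ₖ sigma2)
        + (g₃ : ℂ) • (sigma3 ⊗ₖ sigma3)) * ρ).trace).re := by
  obtain ⟨n, w, a, b, hw, hsum, hA, hB, rfl⟩ := hρ
  rw [Finset.mul_sum, Matrix.trace_sum, Complex.re_sum]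
  apply Finset.sum_nonneg
  intro i _
  rw [Matrix.mul_smul, Matrix.trace_smul, smul_eq_mul, Complex.re_ofReal_mul]
  exact mul_nonneg (hw i) (key g₁ g₂ g₃ h₁ h₂ h₃ (a i) (b i)
    (hA i).1 (hA i).2 (hB i).1 (hB i).2)

end SSDSE13
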